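/- Let λ₁ > 0, λ₂ > 0, α > 0 and θ ∈ [-1, 1], let D = λ₂α/(λ₁+λ₂α) + θλ₁·(2/(2λ₁+λ₂α) + 1/(λ₁+2λ₂α) - 2/(λ₁+λ₂α)), K = λ₁/D, let f^w(x) = K e^{-λ₁x}(1 - e^{-λ₂αx})(1 - θe^{-λ₂αx}(1 - 2e^{-λ₁x})) and F^w(x) = ∫₀^x f^w(t) dt. Then the hazard rate function h^w(x) = f^w(x)/(1 - F^w(x)) tends to λ₁ as x tends to +∞. -/

import Mathlib

open MeasureTheory Filter Topology Real

private lemma hd_exp (c : ℝ) (hc : c ≠ 0) (t : ℝ) :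
    HasDerivAt (fun x : ℝ => -(Real.exp (-(c*x))/c)) (Real.exp (-(c*t))) t := by
  have h1 : HasDerivAt (fun x : ℝ => -(c*x)) (-c) t := by
    simpa [neg_mul] using (hasDerivAt_id t).const_mul (-c)
  have h2 := (Real.hasDerivAt_exp (-(c*t))).comp t h1
  have h3 := (h2.div_const c).neg
  refine HasDerivAt.congr_deriv h3 ?_
  field_simp

private lemma hz_exp (c : ℝ) (hc : 0 < c) :
    Tendsto (fun x : ℝ => Real.exp (-(c*x))) atTop (nhds 0) := by
  have h1 : Tendsto (fun x : ℝ => c*x) atTop atTop :=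
    Tendsto.const_mul_atTop hc tendsto_id
  exact Real.tendsto_exp_neg_atTop_nhds_zero.comp h1

set_option maxHeartbeats 1000000 in
theorem gwed_hazard_rate_limit_at_top
    (l₁ l₂ α θ : ℝ) (hl₁ : 0 < l₁) (hl₂ : 0 < l₂) (hα : 0 < α)
    (hθ : θ ∈ Set.Icc (-1 : ℝ) 1)
    (D K : ℝ)
    (hD : D = l₂ * α / (l₁ + l₂ * α)
        + θ * l₁ * (2 / (2 * l₁ + l₂ * α) + 1 / (l₁ + 2 * l₂ * α)
          - 2 / (l₁ + l₂ * α)))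
    (hK : K = l₁ / D)
    (fw Fw : ℝ → ℝ)
    (hfw : ∀ x : ℝ, fw x = K * Real.exp (-l₁ * x) * (1 - Real.exp (-l₂ * α * x))
        * (1 - θ * Real.exp (-l₂ * α * x) * (1 - 2 * Real.exp (-l₁ * x))))
    (hFw : ∀ x : ℝ, Fw x = ∫ t in (0 : ℝ)..x, fw t) :
    Tendsto (fun x => fw x / (1 - Fw x)) atTop (nhds l₁) := by
  obtain ⟨hθ1, hθ2⟩ := hθ
  have ha : 0 < l₂ * α := mul_pos hl₂ hα
  have hc2 : 0 < l₁ + l₂ * α := by linarith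
  have hc3 : 0 < 2*l₁ + l₂ * α := by linarith
  have hc4 : 0 < l₁ + 2*(l₂ * α) := by linarith
  have hc5 : 0 < 2*l₁ + 2*(l₂ * α) := by linarith
  -- S and its positivity
  set S : ℝ := 1/l₁ - (1+θ)/(l₁ + l₂*α) + 2*θ/(2*l₁ + l₂*α) + θ/(l₁ + 2*(l₂*α))
      - 2*θ/(2*l₁ + 2*(l₂*α)) with hSdef
  have hS1 : (0:ℝ) < 1/l₁ - 3/(l₁ + l₂*α) + 2/(2*l₁ + l₂*α) + 1/(l₁ + 2*(l₂*α)) := by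
    have : 1/l₁ - 3/(l₁ + l₂*α) + 2/(2*l₁ + l₂*α) + 1/(l₁ + 2*(l₂*α))
        = (l₂*α)/(l₁ + l₂*α) * (2*(l₂*α)/(l₁*(l₁ + 2*(l₂*α))) + 1/(2*l₁ + l₂*α)) := by
      field_simp
      ring
    rw [this]; positivity
  have hSm : (0:ℝ) < 1/l₁ + 1/(l₁ + l₂*α) - 2/(2*l₁ + l₂*α) - 1/(l₁ + 2*(l₂*α)) := by
    have : 1/l₁ + 1/(l₁ + l₂*α) - 2/(2*l₁ + l₂*α) - 1/(l₁ + 2*(l₂*α))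
        = (l₂*α)/(l₁*(2*l₁ + l₂*α)) + (l₂*α)/((l₁ + l₂*α)*(l₁ + 2*(l₂*α))) := by
      field_simp
      ring
    rw [this]; positivity
  have hScomb : S = (1+θ)/2 * (1/l₁ - 3/(l₁ + l₂*α) + 2/(2*l₁ + l₂*α) + 1/(l₁ + 2*(l₂*α)))
      + (1-θ)/2 * (1/l₁ + 1/(l₁ + l₂*α) - 2/(2*l₁ + l₂*α) - 1/(l₁ + 2*(l₂*α))) := by
    rw [hSdef]; field_simp; ring
  have hSpos : 0 < S := by
    rw [hScomb]
    rcases le_total θ 0 with h | h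
    · nlinarith
    · nlinarith
  have hDS : D = l₁ * S := by
    rw [hD, hSdef]; field_simp; ring
  have hKS : K * S = 1 := by
    rw [hK, hDS]
    field_simp
  have hKpos : 0 < K := by
    have : K = 1 / S := by
      rw [hK, hDS]; field_simp
    rw [this]; positivity
  -- antiderivative
  set G : ℝ → ℝ := fun x => K * ((-(Real.exp (-(l₁*x))/l₁))
      - (1+θ) * (-(Real.exp (-((l₁ + l₂*α)*x))/(l₁ + l₂*α)))
      + (2*θ) * (-(Real.exp (-((2*l₁ + l₂*α)*x))/(2*l₁ + l₂*α)))
      + θ * (-(Real.exp (-((l₁ + 2*(l₂*α))*x))/(l₁ + 2*(l₂*α))))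
      - (2*θ) * (-(Real.exp (-((2*l₁ + 2*(l₂*α))*x))/(2*l₁ + 2*(l₂*α))))) with hGdef
  have e2 : ∀ t : ℝ, Real.exp (-((l₁ + l₂*α)*t)) = Real.exp (-(l₁*t)) * Real.exp (-(l₂*α*t)) := by
    intro t; rw [← Real.exp_add]; congr 1; ring
  have e3 : ∀ t : ℝ, Real.exp (-((2*l₁ + l₂*α)*t))
      = Real.exp (-(l₁*t)) * Real.exp (-(l₁*t)) * Real.exp (-(l₂*α*t)) := by
    intro t; rw [← Real.exp_add, ← Real.exp_add]; congr 1; ring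
  have e4 : ∀ t : ℝ, Real.exp (-((l₁ + 2*(l₂*α))*t))
      = Real.exp (-(l₁*t)) * Real.exp (-(l₂*α*t)) * Real.exp (-(l₂*α*t)) := by
    intro t; rw [← Real.exp_add, ← Real.exp_add]; congr 1; ring
  have e5 : ∀ t : ℝ, Real.exp (-((2*l₁ + 2*(l₂*α))*t))
      = Real.exp (-(l₁*t)) * Real.exp (-(l₁*t)) * Real.exp (-(l₂*α*t)) * Real.exp (-(l₂*α*t)) := by
    intro t; rw [← Real.exp_add, ← Real.exp_add, ← Real.exp_add]; congr 1; ring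
  have e6 : ∀ t : ℝ, Real.exp (-(2*(l₂*α)*t)) = Real.exp (-(l₂*α*t)) * Real.exp (-(l₂*α*t)) := by
    intro t; rw [← Real.exp_add]; congr 1; ring
  have hG : ∀ t : ℝ, HasDerivAt G (fw t) t := by
    intro t
    have h := (((((hd_exp l₁ hl₁.ne' t).sub ((hd_exp (l₁ + l₂*α) hc2.ne' t).const_mul (1+θ))).add
        ((hd_exp (2*l₁ + l₂*α) hc3.ne' t).const_mul (2*θ))).add
        ((hd_exp (l₁ + 2*(l₂*α)) hc4.ne' t).const_mul θ)).sub
        ((hd_exp (2*l₁ + 2*(l₂*α)) hc5.ne' t).const_mul (2*θ))).const_mul K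
    refine HasDerivAt.congr_deriv h ?_
    symm
    rw [hfw t]
    simp only [neg_mul]
    rw [e2 t, e3 t, e4 t, e5 t]
    ring
  have hcont : Continuous fw := by
    have hfw' : fw = fun x => K * Real.exp (-l₁ * x) * (1 - Real.exp (-l₂ * α * x))
        * (1 - θ * Real.exp (-l₂ * α * x) * (1 - 2 * Real.exp (-l₁ * x))) := funext hfw
    rw [hfw']
    fun_prop
  have hFwG : ∀ x : ℝ, Fw x = G x - G 0 := by
    intro x
    rw [hFw x]
    exact intervalIntegral.integral_eq_sub_of_hasDerivAt (fun t _ => hG t)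
      (hcont.intervalIntegrable 0 x)
  have hG0 : G 0 = -1 := by
    rw [hGdef]
    simp only [mul_zero, neg_zero, Real.exp_zero]
    rw [hSdef] at hKS
    linear_combination -hKS
  -- explicit numerator and denominator after cancellation
  set Nf : ℝ → ℝ := fun x => (1 - Real.exp (-(l₂*α*x)))
      * (1 - θ * Real.exp (-(l₂*α*x)) * (1 - 2 * Real.exp (-(l₁*x)))) with hNfdef
  set Qf : ℝ → ℝ := fun x => 1/l₁ - (1+θ) * Real.exp (-(l₂*α*x)) / (l₁ + l₂*α)
      + 2*θ * Real.exp (-((l₁ + l₂*α)*x)) / (2*l₁ + l₂*α)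
      + θ * Real.exp (-(2*(l₂*α)*x)) / (l₁ + 2*(l₂*α))
      - 2*θ * Real.exp (-((l₁ + 2*(l₂*α))*x)) / (2*l₁ + 2*(l₂*α)) with hQfdef
  have hnum : ∀ x : ℝ, fw x = (K * Real.exp (-(l₁*x))) * Nf x := by
    intro x
    rw [hfw x, hNfdef]
    simp only [neg_mul]
    ring
  have hden : ∀ x : ℝ, 1 - Fw x = (K * Real.exp (-(l₁*x))) * Qf x := by
    intro x
    rw [hFwG x, hG0]
    have key : -(G x) = (K * Real.exp (-(l₁*x))) * Qf x := by
      rw [hGdef, hQfdef]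
      simp only []
      rw [e2 x, e3 x, e4 x, e5 x]
      have h7 : Real.exp (-((l₁ + l₂*α)*x)) = Real.exp (-(l₁*x)) * Real.exp (-(l₂*α*x)) := e2 x
      rw [e6 x]
      ring
    rw [show (1:ℝ) - (G x - (-1)) = -(G x) by ring]
    exact key
  have heq : ∀ x : ℝ, fw x / (1 - Fw x) = Nf x / Qf x := by
    intro x
    rw [hnum x, hden x, mul_div_mul_left _ _ (by positivity : K * Real.exp (-(l₁*x)) ≠ 0)]
  -- limits
  have hzl₁ := hz_exp l₁ hl₁
  have hza := hz_exp (l₂*α) ha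
  have hz2 := hz_exp (l₁ + l₂*α) hc2
  have hz4' := hz_exp (2*(l₂*α)) (by linarith)
  have hz4 := hz_exp (l₁ + 2*(l₂*α)) hc4
  have hN : Tendsto Nf atTop (nhds 1) := by
    rw [hNfdef]
    have h : Tendsto (fun x : ℝ => (1 - Real.exp (-(l₂*α*x)))
        * (1 - θ * Real.exp (-(l₂*α*x)) * (1 - 2 * Real.exp (-(l₁*x))))) atTop
        (nhds ((1 - 0) * (1 - θ * 0 * (1 - 2 * 0)))) :=
      (tendsto_const_nhds.sub hza).mul
        (tendsto_const_nhds.sub ((tendsto_const_nhds.mul hza).mul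
          (tendsto_const_nhds.sub (tendsto_const_nhds.mul hzl₁))))
    simpa using h
  have hQ : Tendsto Qf atTop (nhds (1/l₁)) := by
    rw [hQfdef]
    have h : Tendsto (fun x : ℝ => 1/l₁ - (1+θ) * Real.exp (-(l₂*α*x)) / (l₁ + l₂*α)
        + 2*θ * Real.exp (-((l₁ + l₂*α)*x)) / (2*l₁ + l₂*α)
        + θ * Real.exp (-(2*(l₂*α)*x)) / (l₁ + 2*(l₂*α))
        - 2*θ * Real.exp (-((l₁ + 2*(l₂*α))*x)) / (2*l₁ + 2*(l₂*α))) atTop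
        (nhds (1/l₁ - (1+θ) * 0 / (l₁ + l₂*α) + 2*θ * 0 / (2*l₁ + l₂*α)
          + θ * 0 / (l₁ + 2*(l₂*α)) - 2*θ * 0 / (2*l₁ + 2*(l₂*α)))) :=
      ((((tendsto_const_nhds.sub
        ((hza.const_mul (1+θ)).div_const (l₁ + l₂*α))).add
        ((hz2.const_mul (2*θ)).div_const (2*l₁ + l₂*α))).add
        ((hz4'.const_mul θ).div_const (l₁ + 2*(l₂*α)))).sub
        ((hz4.const_mul (2*θ)).div_const (2*l₁ + 2*(l₂*α))))
    simpa using h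
  have hfinal := hN.div hQ (by positivity)
  rw [show (1:ℝ) / (1/l₁) = l₁ by field_simp] at hfinal
  exact Tendsto.congr (fun x => (heq x).symm) hfinal
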